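/- Suppose W^{(1)},…,W^{(S)} are symmetric zero-diagonal N×N matrices such that both Σ_w (with entries proportional to the Frobenius inner products ⟨Ŵ^{(s)}, Ŵ^{(s')}⟩_F) and Σ_diff (with entries proportional to Σ_i W̃_{i·}^{(s)}W̃_{i·}^{(s')}) are positive definite. Then the 2S×2S covariance matrix Σ_S of the vector (U_x^{(1)} − μ_x^{(1)}, U_y^{(1)} − μ_y^{(1)}, …, U_x^{(S)} − μ_x^{(S)}, U_y^{(S)} − μ_y^{(S)}) under the permutation null is positive definite, and the quadratic form T_S = v_Sᵀ Σ_S^{-1} v_S decomposes as T_S = v_wᵀ Σ_w^{-1} v_w + v_diffᵀ Σ_diff^{-1} v_diff, where v_w and v_diff are the centered vectors of U_w^{(s)} and U_diff^{(s)} respectively. -/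

import Mathlib

open Finset Matrix

/-- Expectation under the uniform distribution on permutations of `Fin N`. -/
noncomputable def pE {N : ℕ} (f : Equiv.Perm (Fin N) → ℝ) : ℝ :=
  (∑ π : Equiv.Perm (Fin N), f π) / (Fintype.card (Equiv.Perm (Fin N)) : ℝ)

/-- Covariance under the uniform distribution on permutations of `Fin N`. -/
noncomputable def pCov {N : ℕ} (f g : Equiv.Perm (Fin N) → ℝ) : ℝ :=
  pE (fun π => (f π - pE f) * (g π - pE g))

/-- Within-first-group sum: sums `W i j` over pairs both assigned to the first `m` labels. -/
noncomputable def Ux {N : ℕ} (W : Matrix (Fin N) (Fin N) ℝ) (m : ℕ)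
    (π : Equiv.Perm (Fin N)) : ℝ :=
  ∑ i, ∑ j, if (π i : ℕ) < m ∧ (π j : ℕ) < m then W i j else 0

/-- Within-second-group sum: sums `W i j` over pairs both assigned to labels `> m`. -/
noncomputable def Uy {N : ℕ} (W : Matrix (Fin N) (Fin N) ℝ) (m : ℕ)
    (π : Equiv.Perm (Fin N)) : ℝ :=
  ∑ i, ∑ j, if m ≤ (π i : ℕ) ∧ m ≤ (π j : ℕ) then W i j else 0
/-- The weighted combination `U_w` of the within-group sums. -/
noncomputable def UwS {N : ℕ} (W : Matrix (Fin N) (Fin N) ℝ) (m n : ℕ)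
    (π : Equiv.Perm (Fin N)) : ℝ :=
  (((n : ℝ) - 1) * Ux W m π + ((m : ℝ) - 1) * Uy W m π) / ((N : ℝ) - 2)

/-- The 2S-dimensional vector of statistics, indexed by `Fin S × Bool`:
`(s, false)` is `U_x^{(s)}` and `(s, true)` is `U_y^{(s)}`. -/
noncomputable def VS {N S : ℕ} (W : Fin S → Matrix (Fin N) (Fin N) ℝ) (m : ℕ)
    (p : Fin S × Bool) (π : Equiv.Perm (Fin N)) : ℝ :=
  if p.2 then Uy (W p.1) m π else Ux (W p.1) m π


section basics
variable {N : ℕ}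

lemma card_perm_ne : (Fintype.card (Equiv.Perm (Fin N)) : ℝ) ≠ 0 := by
  exact_mod_cast Fintype.card_pos.ne'

lemma pE_const (c : ℝ) : pE (fun _ : Equiv.Perm (Fin N) => c) = c := by
  simp [pE, div_eq_iff card_perm_ne, mul_comm]

lemma pE_add (f g : Equiv.Perm (Fin N) → ℝ) :
    pE (fun π => f π + g π) = pE f + pE g := by
  simp [pE, Finset.sum_add_distrib, add_div]

lemma pE_smul (c : ℝ) (f : Equiv.Perm (Fin N) → ℝ) :
    pE (fun π => c * f π) = c * pE f := by
  simp [pE, ← Finset.mul_sum, mul_div_assoc]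

lemma pE_sub (f g : Equiv.Perm (Fin N) → ℝ) :
    pE (fun π => f π - g π) = pE f - pE g := by
  simp [pE, Finset.sum_sub_distrib, sub_div]

lemma pE_sum {ι : Type*} (s : Finset ι) (f : ι → Equiv.Perm (Fin N) → ℝ) :
    pE (fun π => ∑ i ∈ s, f i π) = ∑ i ∈ s, pE (f i) := by
  unfold pE
  rw [Finset.sum_comm, Finset.sum_div]

lemma pE_ite (P : Prop) [Decidable P] (f : Equiv.Perm (Fin N) → ℝ) :
    pE (fun π => if P then f π else 0) = if P then pE f else 0 := by
  by_cases h : P <;> simp [h, pE]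

lemma pE_congr {f g : Equiv.Perm (Fin N) → ℝ} (h : ∀ π, f π = g π) : pE f = pE g := by
  congr 1; exact funext h

lemma pCov_eq (f g : Equiv.Perm (Fin N) → ℝ) :
    pCov f g = pE (fun π => f π * g π) - pE f * pE g := by
  have : ∀ π : Equiv.Perm (Fin N),
      (f π - pE f) * (g π - pE g)
        = f π * g π - (pE f * g π + (pE g * f π - pE f * pE g)) := by
    intro π; ring
  rw [pCov, pE_congr this, pE_sub, pE_add, pE_sub, pE_smul, pE_smul, pE_const]
  ring

lemma pCov_comm (f g : Equiv.Perm (Fin N) → ℝ) : pCov f g = pCov g f := by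
  rw [pCov_eq, pCov_eq, mul_comm (pE f)]
  congr 1
  exact pE_congr fun π => mul_comm _ _

lemma pE_right_invariant (σ : Equiv.Perm (Fin N)) (f : Equiv.Perm (Fin N) → ℝ) :
    pE (fun π => f (π * σ)) = pE f := by
  unfold pE
  congr 1
  exact Fintype.sum_equiv (Equiv.mulRight σ) _ _ (fun π => rfl)

end basics

section chi
variable {N m : ℕ}

/-- indicator that `π i` lands in the first group. -/
noncomputable def chi (m : ℕ) {N : ℕ} (i : Fin N) (π : Equiv.Perm (Fin N)) : ℝ :=
  if (π i : ℕ) < m then 1 else 0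

lemma chi_mul_self (i : Fin N) (π : Equiv.Perm (Fin N)) :
    chi m i π * chi m i π = chi m i π := by
  unfold chi; by_cases h : (π i : ℕ) < m <;> simp [h]

lemma chi_comp (i : Fin N) (σ π : Equiv.Perm (Fin N)) :
    chi m i (π * σ) = chi m (σ i) π := by
  unfold chi; rfl

lemma sum_chi (hmN : m ≤ N) (π : Equiv.Perm (Fin N)) :
    ∑ i, chi m i π = (m : ℝ) := by
  unfold chi
  rw [Equiv.sum_comp π (fun b : Fin N => if (b : ℕ) < m then (1:ℝ) else 0)]
  rw [Fin.sum_univ_eq_sum_range (fun b => if b < m then (1:ℝ) else 0)]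
  rw [Finset.sum_boole]
  have : Finset.filter (fun b => b < m) (Finset.range N) = Finset.range m := by
    ext x; simp; omega
  simp [this]

end chi

section extend
variable {α : Type*} [DecidableEq α]

lemma exists_perm_two {b c b' c' : α} (hbc : b ≠ c) (h' : b' ≠ c') :
    ∃ σ : Equiv.Perm α, σ b = b' ∧ σ c = c' := by
  refine ⟨Equiv.swap (Equiv.swap b b' c) c' * Equiv.swap b b', ?_, ?_⟩
  · have h1 : Equiv.swap b b' c ≠ b' := by
      intro h
      have : Equiv.swap b b' c = Equiv.swap b b' b := by rw [Equiv.swap_apply_left]; exact h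
      exact hbc ((Equiv.swap b b').injective this).symm
    have : (Equiv.swap b b') b = b' := Equiv.swap_apply_left b b'
    rw [Equiv.Perm.mul_apply, this, Equiv.swap_apply_of_ne_of_ne (Ne.symm h1) h']
  · simp [Equiv.Perm.mul_apply, Equiv.swap_apply_left]

lemma exists_perm_three {b c d b' c' d' : α} (hbc : b ≠ c) (hbd : b ≠ d) (hcd : c ≠ d)
    (hbc' : b' ≠ c') (hbd' : b' ≠ d') (hcd' : c' ≠ d') :
    ∃ σ : Equiv.Perm α, σ b = b' ∧ σ c = c' ∧ σ d = d' := by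
  obtain ⟨τ, hτb, hτc⟩ := exists_perm_two hbc hbc'
  refine ⟨Equiv.swap (τ d) d' * τ, ?_, ?_, ?_⟩
  · have h1 : τ d ≠ b' := by rw [← hτb]; exact fun h => hbd (τ.injective h).symm
    simp [Equiv.Perm.mul_apply, hτb, Equiv.swap_apply_of_ne_of_ne (Ne.symm h1) hbd']
  · have h1 : τ d ≠ c' := by rw [← hτc]; exact fun h => hcd (τ.injective h).symm
    simp [Equiv.Perm.mul_apply, hτc, Equiv.swap_apply_of_ne_of_ne (Ne.symm h1) hcd']
  · simp [Equiv.Perm.mul_apply, Equiv.swap_apply_left]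

end extend

section indicator
variable {N : ℕ}

lemma ite_ne_eq (P : Prop) [Decidable P] (x : ℝ) :
    (if ¬ P then x else 0) = x - (if P then x else 0) := by
  by_cases h : P <;> simp [h]

lemma sum_pairs (v : Fin N → ℝ) (hv : ∀ i, v i * v i = v i) (t : ℝ) (ht : ∑ i, v i = t) :
    ∑ i, ∑ k, (if i ≠ k then v i * v k else 0) = t * t - t := by
  have : ∀ i : Fin N, ∑ k, (if i ≠ k then v i * v k else 0) = v i * t - v i := by
    intro i
    have : ∀ k : Fin N, (if i ≠ k then v i * v k else 0)
        = v i * v k - (if i = k then v i * v k else 0) := fun k => ite_ne_eq _ _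
    rw [Finset.sum_congr rfl (fun k _ => this k), Finset.sum_sub_distrib, ← Finset.mul_sum, ht,
      Finset.sum_ite_eq _ i (fun k => v i * v k)]
    simp [hv i]
  rw [Finset.sum_congr rfl (fun i _ => this i), Finset.sum_sub_distrib, ← Finset.sum_mul, ht]

lemma triple_ite_expand (i j k : Fin N) (x : ℝ) :
    (if i ≠ j ∧ i ≠ k ∧ j ≠ k then x else 0)
      = x - (if i = j then x else 0) - (if i = k then x else 0) - (if j = k then x else 0)
        + (if i = j ∧ j = k then x else 0) + (if i = j ∧ j = k then x else 0) := by
  by_cases h1 : i = j <;> by_cases h2 : i = k <;> by_cases h3 : j = k <;>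
    simp_all <;> ring_nf <;> simp_all

lemma sum_triples (v : Fin N → ℝ) (hv : ∀ i, v i * v i = v i) (t : ℝ) (ht : ∑ i, v i = t) :
    ∑ i, ∑ j, ∑ k, (if i ≠ j ∧ i ≠ k ∧ j ≠ k then v i * v j * v k else 0)
      = t * (t - 1) * (t - 2) := by
  have e1 : ∑ i : Fin N, ∑ j : Fin N, ∑ k : Fin N, v i * v j * v k = t * t * t := by
    simp only [← Finset.sum_mul, ← Finset.mul_sum, ht]
  have e2 : ∑ i : Fin N, ∑ j : Fin N, ∑ k : Fin N, (if i = j then v i * v j * v k else 0)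
      = t * t := by
    have : ∀ i j : Fin N, ∑ k : Fin N, (if i = j then v i * v j * v k else 0)
        = (if i = j then v i * v j else 0) * t := by
      intro i j; by_cases h : i = j <;> simp [h, ← Finset.mul_sum, ht, mul_assoc]
    simp only [this, ← Finset.sum_mul]
    congr 1
    have : ∀ i : Fin N, ∑ j : Fin N, (if i = j then v i * v j else 0) = v i := by
      intro i; rw [Finset.sum_ite_eq _ i (fun j => v i * v j)]; simp [hv i]
    rw [Finset.sum_congr rfl (fun i _ => this i), ht]
  have e3 : ∑ i : Fin N, ∑ j : Fin N, ∑ k : Fin N, (if i = k then v i * v j * v k else 0)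
      = t * t := by
    have : ∀ i : Fin N, ∑ j : Fin N, ∑ k : Fin N, (if i = k then v i * v j * v k else 0)
        = v i * t := by
      intro i
      have : ∀ j : Fin N, ∑ k : Fin N, (if i = k then v i * v j * v k else 0)
          = v i * v j := by
        intro j
        rw [Finset.sum_ite_eq _ i (fun k => v i * v j * v k)]
        simp only [Finset.mem_univ, if_true]
        rw [mul_right_comm, hv i]
      rw [Finset.sum_congr rfl (fun j _ => this j), ← Finset.mul_sum, ht]
    rw [Finset.sum_congr rfl (fun i _ => this i), ← Finset.sum_mul, ht]
  have e4 : ∑ i : Fin N, ∑ j : Fin N, ∑ k : Fin N, (if j = k then v i * v j * v k else 0)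
      = t * t := by
    have : ∀ i : Fin N, ∑ j : Fin N, ∑ k : Fin N, (if j = k then v i * v j * v k else 0)
        = v i * t := by
      intro i
      have : ∀ j : Fin N, ∑ k : Fin N, (if j = k then v i * v j * v k else 0)
          = v i * v j := by
        intro j; rw [Finset.sum_ite_eq _ j (fun k => v i * v j * v k)]
        simp [mul_assoc, hv j]
      rw [Finset.sum_congr rfl (fun j _ => this j), ← Finset.mul_sum, ht]
    rw [Finset.sum_congr rfl (fun i _ => this i), ← Finset.sum_mul, ht]
  have e5 : ∑ i : Fin N, ∑ j : Fin N, ∑ k : Fin N, (if i = j ∧ j = k then v i * v j * v k else 0)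
      = t := by
    have : ∀ i j : Fin N, ∑ k : Fin N, (if i = j ∧ j = k then v i * v j * v k else 0)
        = (if i = j then v i * v j * v j else 0) := by
      intro i j
      by_cases h : i = j
      · subst h
        simp only [eq_self_iff_true, true_and, if_true]
        rw [Finset.sum_ite_eq _ i (fun k => v i * v i * v k)]
        simp
      · simp [h]
    simp only [this]
    have : ∀ i : Fin N, ∑ j : Fin N, (if i = j then v i * v j * v j else 0)
        = v i := by
      intro i; rw [Finset.sum_ite_eq _ i (fun j => v i * v j * v j)]
      simp [hv i]
    rw [Finset.sum_congr rfl (fun i _ => this i), ht]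
  calc ∑ i, ∑ j, ∑ k, (if i ≠ j ∧ i ≠ k ∧ j ≠ k then v i * v j * v k else 0)
      = ∑ i : Fin N, ∑ j : Fin N, ∑ k : Fin N,
        (v i * v j * v k - (if i = j then v i * v j * v k else 0)
          - (if i = k then v i * v j * v k else 0) - (if j = k then v i * v j * v k else 0)
          + (if i = j ∧ j = k then v i * v j * v k else 0)
          + (if i = j ∧ j = k then v i * v j * v k else 0)) := by
        exact Finset.sum_congr rfl fun i _ => Finset.sum_congr rfl fun j _ =>
          Finset.sum_congr rfl fun k _ => triple_ite_expand i j k _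
    _ = t * (t-1) * (t-2) := by
        simp only [Finset.sum_add_distrib, Finset.sum_sub_distrib]
        rw [e1, e2, e3, e4, e5]
        ring

end indicator

section moments
variable {N m : ℕ}

lemma pE_chi (hmN : m ≤ N) (hN1 : 1 ≤ N) (i : Fin N) :
    pE (chi m i) = (m : ℝ) / N := by
  have heq : ∀ i' : Fin N, pE (chi m i') = pE (chi m i) := by
    intro i'
    have h1 : ∀ π : Equiv.Perm (Fin N), chi m i' π = chi m i (π * Equiv.swap i i') := by
      intro π; rw [chi_comp, Equiv.swap_apply_left]
    rw [pE_congr h1, pE_right_invariant]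
  have hN0 : (0 : ℝ) < (N : ℝ) := by exact_mod_cast hN1
  have key : (N : ℝ) * pE (chi m i) = m := by
    calc (N : ℝ) * pE (chi m i) = ∑ i' : Fin N, pE (chi m i') := by
          rw [Finset.sum_congr rfl (fun i' _ => heq i')]
          simp [Finset.card_univ, mul_comm]
      _ = pE (fun π => ∑ i', chi m i' π) := (pE_sum Finset.univ _).symm
      _ = pE (fun _ => (m : ℝ)) := pE_congr (sum_chi hmN)
      _ = m := pE_const _
  rw [eq_div_iff hN0.ne']
  linarith [key]

lemma pE_chi_chi (hmN : m ≤ N) (hN2 : 2 ≤ N) {i k : Fin N} (hik : i ≠ k) :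
    pE (fun π => chi m i π * chi m k π)
      = ((m : ℝ) * ((m : ℝ) - 1)) / ((N : ℝ) * ((N : ℝ) - 1)) := by
  set c := pE (fun π => chi m i π * chi m k π) with hc
  have heq : ∀ i' k' : Fin N, i' ≠ k' →
      pE (fun π => chi m i' π * chi m k' π) = c := by
    intro i' k' h'
    obtain ⟨σ, hσi, hσk⟩ := exists_perm_two hik h'
    have h1 : ∀ π : Equiv.Perm (Fin N),
        chi m i' π * chi m k' π = chi m i (π * σ) * chi m k (π * σ) := by
      intro π; rw [chi_comp, chi_comp, hσi, hσk]
    rw [pE_congr h1]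
    exact pE_right_invariant σ (fun π => chi m i π * chi m k π)
  have count : ∑ i' : Fin N, ∑ k' : Fin N, (if i' ≠ k' then (1 : ℝ) else 0)
      = (N : ℝ) * (N : ℝ) - (N : ℝ) := by
    have := sum_pairs (fun _ : Fin N => (1 : ℝ)) (by simp) (N : ℝ) (by simp)
    simpa using this
  have key1 : ∑ i' : Fin N, ∑ k' : Fin N,
      (if i' ≠ k' then pE (fun π => chi m i' π * chi m k' π) else 0)
      = (m : ℝ) * (m : ℝ) - m := by
    have step : ∀ i' k' : Fin N,
        (if i' ≠ k' then pE (fun π => chi m i' π * chi m k' π) else 0)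
          = pE (fun π => if i' ≠ k' then chi m i' π * chi m k' π else 0) := by
      intro i' k'; rw [pE_ite]
    rw [Finset.sum_congr rfl fun i' _ => Finset.sum_congr rfl fun k' _ => step i' k']
    rw [Finset.sum_congr rfl fun i' _ => (pE_sum Finset.univ _).symm, (pE_sum Finset.univ _).symm]
    rw [pE_congr (fun π => sum_pairs (fun i' => chi m i' π) (fun i' => chi_mul_self i' π)
      (m : ℝ) (sum_chi hmN π))]
    rw [pE_const]
  have key2 : ∑ i' : Fin N, ∑ k' : Fin N,
      (if i' ≠ k' then pE (fun π => chi m i' π * chi m k' π) else 0)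
      = c * ((N : ℝ) * (N : ℝ) - (N : ℝ)) := by
    rw [← count, Finset.mul_sum]
    refine Finset.sum_congr rfl fun i' _ => ?_
    rw [Finset.mul_sum]
    refine Finset.sum_congr rfl fun k' _ => ?_
    by_cases h : i' ≠ k'
    · rw [if_pos h, if_pos h, heq i' k' h, mul_one]
    · rw [if_neg h, if_neg h, mul_zero]
  have hNpos : (0 : ℝ) < (N : ℝ) * ((N : ℝ) - 1) := by
    have h1 : (2 : ℝ) ≤ (N : ℝ) := by exact_mod_cast hN2
    nlinarith
  rw [eq_div_iff hNpos.ne']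
  nlinarith [key1, key2]

lemma pE_chi₃ (hmN : m ≤ N) (hN3 : 3 ≤ N) {i j k : Fin N}
    (hij : i ≠ j) (hik : i ≠ k) (hjk : j ≠ k) :
    pE (fun π => chi m i π * chi m j π * chi m k π)
      = ((m : ℝ) * ((m : ℝ) - 1) * ((m : ℝ) - 2))
        / ((N : ℝ) * ((N : ℝ) - 1) * ((N : ℝ) - 2)) := by
  set c := pE (fun π => chi m i π * chi m j π * chi m k π) with hc
  have heq : ∀ i' j' k' : Fin N, i' ≠ j' → i' ≠ k' → j' ≠ k' →
      pE (fun π => chi m i' π * chi m j' π * chi m k' π) = c := by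
    intro i' j' k' h1 h2 h3
    obtain ⟨σ, hσi, hσj, hσk⟩ := exists_perm_three hij hik hjk h1 h2 h3
    have h4 : ∀ π : Equiv.Perm (Fin N),
        chi m i' π * chi m j' π * chi m k' π
          = chi m i (π * σ) * chi m j (π * σ) * chi m k (π * σ) := by
      intro π; rw [chi_comp, chi_comp, chi_comp, hσi, hσj, hσk]
    rw [pE_congr h4]
    exact pE_right_invariant σ (fun π => chi m i π * chi m j π * chi m k π)
  have count : ∑ i' : Fin N, ∑ j' : Fin N, ∑ k' : Fin N,
      (if i' ≠ j' ∧ i' ≠ k' ∧ j' ≠ k' then (1 : ℝ) else 0)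
      = (N : ℝ) * ((N : ℝ) - 1) * ((N : ℝ) - 2) := by
    have := sum_triples (fun _ : Fin N => (1 : ℝ)) (by simp) (N : ℝ) (by simp)
    simpa using this
  have key1 : ∑ i' : Fin N, ∑ j' : Fin N, ∑ k' : Fin N,
      (if i' ≠ j' ∧ i' ≠ k' ∧ j' ≠ k'
        then pE (fun π => chi m i' π * chi m j' π * chi m k' π) else 0)
      = (m : ℝ) * ((m : ℝ) - 1) * ((m : ℝ) - 2) := by
    have step : ∀ i' j' k' : Fin N,
        (if i' ≠ j' ∧ i' ≠ k' ∧ j' ≠ k'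
          then pE (fun π => chi m i' π * chi m j' π * chi m k' π) else 0)
          = pE (fun π => if i' ≠ j' ∧ i' ≠ k' ∧ j' ≠ k'
              then chi m i' π * chi m j' π * chi m k' π else 0) := by
      intro i' j' k'; rw [pE_ite]
    rw [Finset.sum_congr rfl fun i' _ => Finset.sum_congr rfl fun j' _ =>
      Finset.sum_congr rfl fun k' _ => step i' j' k']
    rw [Finset.sum_congr rfl fun i' _ => Finset.sum_congr rfl fun j' _ =>
      (pE_sum Finset.univ _).symm]
    rw [Finset.sum_congr rfl fun i' _ => (pE_sum Finset.univ _).symm,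
      (pE_sum Finset.univ _).symm]
    rw [pE_congr (fun π => sum_triples (fun i' => chi m i' π) (fun i' => chi_mul_self i' π)
      (m : ℝ) (sum_chi hmN π))]
    rw [pE_const]
  have key2 : ∑ i' : Fin N, ∑ j' : Fin N, ∑ k' : Fin N,
      (if i' ≠ j' ∧ i' ≠ k' ∧ j' ≠ k'
        then pE (fun π => chi m i' π * chi m j' π * chi m k' π) else 0)
      = c * ((N : ℝ) * ((N : ℝ) - 1) * ((N : ℝ) - 2)) := by
    rw [← count, Finset.mul_sum]
    refine Finset.sum_congr rfl fun i' _ => ?_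
    rw [Finset.mul_sum]
    refine Finset.sum_congr rfl fun j' _ => ?_
    rw [Finset.mul_sum]
    refine Finset.sum_congr rfl fun k' _ => ?_
    by_cases h : i' ≠ j' ∧ i' ≠ k' ∧ j' ≠ k'
    · rw [if_pos h, if_pos h, heq i' j' k' h.1 h.2.1 h.2.2, mul_one]
    · rw [if_neg h, if_neg h, mul_zero]
  have hNpos : (0 : ℝ) < (N : ℝ) * ((N : ℝ) - 1) * ((N : ℝ) - 2) := by
    have h1 : (3 : ℝ) ≤ (N : ℝ) := by exact_mod_cast hN3
    exact mul_pos (mul_pos (by linarith) (by linarith)) (by linarith)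
  rw [eq_div_iff hNpos.ne']
  nlinarith [key1, key2]

end moments

section covs
variable {N : ℕ} (mm : ℕ)

/-- row sums -/
noncomputable def rowsum {N : ℕ} (W : Matrix (Fin N) (Fin N) ℝ) (i : Fin N) : ℝ := ∑ j, W i j
noncomputable def totsum {N : ℕ} (W : Matrix (Fin N) (Fin N) ℝ) : ℝ := ∑ i, ∑ j, W i j
noncomputable def Lfun {N : ℕ} (W : Matrix (Fin N) (Fin N) ℝ) (m : ℕ)
    (π : Equiv.Perm (Fin N)) : ℝ := ∑ i, rowsum W i * chi m i π
noncomputable def Qsum {N : ℕ} (W W' : Matrix (Fin N) (Fin N) ℝ) : ℝ :=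
  ∑ i, rowsum W i * rowsum W' i

lemma totsum_eq (W : Matrix (Fin N) (Fin N) ℝ) : totsum W = ∑ i, rowsum W i := rfl

lemma Ux_eq (W : Matrix (Fin N) (Fin N) ℝ) (π : Equiv.Perm (Fin N)) :
    Ux W mm π = ∑ i, ∑ j, W i j * chi mm i π * chi mm j π := by
  unfold Ux
  refine Finset.sum_congr rfl fun i _ => Finset.sum_congr rfl fun j _ => ?_
  unfold chi
  by_cases h1 : (π i : ℕ) < mm <;> by_cases h2 : (π j : ℕ) < mm <;> simp [h1, h2]

lemma diff_eq {W : Matrix (Fin N) (Fin N) ℝ} (hsym : W.IsSymm) (π : Equiv.Perm (Fin N)) :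
    Ux W mm π - Uy W mm π = 2 * Lfun W mm π - totsum W := by
  have step : Ux W mm π - Uy W mm π
      = ∑ i, ∑ j, (W i j * chi mm i π + W i j * chi mm j π - W i j) := by
    unfold Ux Uy
    rw [← Finset.sum_sub_distrib]
    refine Finset.sum_congr rfl fun i _ => ?_
    rw [← Finset.sum_sub_distrib]
    refine Finset.sum_congr rfl fun j _ => ?_
    unfold chi
    by_cases h1 : (π i : ℕ) < mm <;> by_cases h2 : (π j : ℕ) < mm <;>
      simp [h1, h2, not_lt.mpr, not_lt] <;> ring_nf <;> omega
  rw [step]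
  simp only [Finset.sum_add_distrib, Finset.sum_sub_distrib]
  have e1 : ∑ i : Fin N, ∑ j : Fin N, W i j * chi mm i π = Lfun W mm π := by
    unfold Lfun rowsum
    exact Finset.sum_congr rfl fun i _ => by rw [Finset.sum_mul]
  have e2 : ∑ i : Fin N, ∑ j : Fin N, W i j * chi mm j π = Lfun W mm π := by
    rw [Finset.sum_comm]
    unfold Lfun rowsum
    refine Finset.sum_congr rfl fun j _ => ?_
    rw [Finset.sum_mul]
    exact Finset.sum_congr rfl fun i _ => by rw [hsym.apply j i]
  rw [e1, e2, show ∑ i : Fin N, ∑ j : Fin N, W i j = totsum W from rfl]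
  ring
end covs

section covs2
variable {N mm nn : ℕ}

lemma Uw_eq (hN : N = mm + nn) (hm : 2 ≤ mm) (hn : 2 ≤ nn)
    {W : Matrix (Fin N) (Fin N) ℝ} (hsym : W.IsSymm) (π : Equiv.Perm (Fin N)) :
    UwS W mm nn π = Ux W mm π
      + ((mm : ℝ) - 1) / ((N : ℝ) - 2) * (totsum W - 2 * Lfun W mm π) := by
  have hNc : (N : ℝ) = (mm : ℝ) + (nn : ℝ) := by rw [hN]; push_cast; ring
  have hden : (N : ℝ) - 2 ≠ 0 := by
    have h1 : (2 : ℝ) ≤ (mm : ℝ) := by exact_mod_cast hm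
    have h2 : (2 : ℝ) ≤ (nn : ℝ) := by exact_mod_cast hn
    rw [hNc]; intro h; linarith
  have hUy : Uy W mm π = Ux W mm π - (2 * Lfun W mm π - totsum W) := by
    have := diff_eq mm hsym π
    linarith
  unfold UwS
  rw [hUy]
  field_simp
  rw [hNc]
  ring

lemma pE_L (hmN : mm ≤ N) (h1N : 1 ≤ N) (W : Matrix (Fin N) (Fin N) ℝ) :
    pE (Lfun W mm) = (mm : ℝ) / N * totsum W := by
  unfold Lfun
  rw [pE_sum]
  rw [Finset.sum_congr rfl fun i _ => by rw [pE_smul, pE_chi hmN h1N i]]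
  rw [totsum_eq, Finset.mul_sum]
  exact Finset.sum_congr rfl fun i _ => by ring

lemma pE_Ux (hmN : mm ≤ N) (h2N : 2 ≤ N) {W : Matrix (Fin N) (Fin N) ℝ}
    (hdiag : ∀ i, W i i = 0) :
    pE (Ux W mm) = ((mm : ℝ) * ((mm : ℝ) - 1)) / ((N : ℝ) * ((N : ℝ) - 1)) * totsum W := by
  have hUx : Ux W mm = fun π => ∑ i, ∑ j, W i j * chi mm i π * chi mm j π :=
    funext fun π => Ux_eq mm W π
  rw [hUx, pE_sum]
  rw [Finset.sum_congr rfl fun i _ => pE_sum Finset.univ _]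
  have per : ∀ i j : Fin N, pE (fun π => W i j * chi mm i π * chi mm j π)
      = W i j * (((mm : ℝ) * ((mm : ℝ) - 1)) / ((N : ℝ) * ((N : ℝ) - 1))) := by
    intro i j
    have : (fun π => W i j * chi mm i π * chi mm j π)
        = fun π => W i j * (chi mm i π * chi mm j π) := funext fun π => by ring
    rw [this, pE_smul]
    by_cases hij : i = j
    · subst hij; rw [hdiag i]; ring
    · rw [pE_chi_chi hmN h2N hij]
  rw [Finset.sum_congr rfl fun i _ => Finset.sum_congr rfl fun j _ => per i j]
  rw [totsum_eq, Finset.mul_sum]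
  refine Finset.sum_congr rfl fun i _ => ?_
  rw [← Finset.sum_mul, mul_comm]
  rfl

lemma pE_L_L (hmN : mm ≤ N) (h2N : 2 ≤ N) (W W' : Matrix (Fin N) (Fin N) ℝ) :
    pE (fun π => Lfun W mm π * Lfun W' mm π)
      = ((mm : ℝ) * ((mm : ℝ) - 1)) / ((N : ℝ) * ((N : ℝ) - 1)) * (totsum W * totsum W')
        + ((mm : ℝ) / N - ((mm : ℝ) * ((mm : ℝ) - 1)) / ((N : ℝ) * ((N : ℝ) - 1)))
          * Qsum W W' := by
  set p1 : ℝ := (mm : ℝ) / N with hp1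
  set p2 : ℝ := ((mm : ℝ) * ((mm : ℝ) - 1)) / ((N : ℝ) * ((N : ℝ) - 1)) with hp2
  have expand : (fun π => Lfun W mm π * Lfun W' mm π)
      = fun π => ∑ i, ∑ k, rowsum W i * rowsum W' k * (chi mm i π * chi mm k π) := by
    funext π
    unfold Lfun
    rw [Finset.sum_mul_sum]
    exact Finset.sum_congr rfl fun i _ => Finset.sum_congr rfl fun k _ => by ring
  rw [expand, pE_sum, Finset.sum_congr rfl fun i _ => pE_sum Finset.univ _]
  have per : ∀ i k : Fin N, pE (fun π => rowsum W i * rowsum W' k * (chi mm i π * chi mm k π))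
      = rowsum W i * rowsum W' k * p2
        + (if i = k then rowsum W i * rowsum W' k * (p1 - p2) else 0) := by
    intro i k
    rw [pE_smul]
    by_cases hik : i = k
    · subst hik
      rw [pE_congr (fun π => chi_mul_self i π), pE_chi hmN (by omega) i, if_pos rfl]
      ring
    · rw [pE_chi_chi hmN h2N hik, if_neg hik]
      ring
  rw [Finset.sum_congr rfl fun i _ => Finset.sum_congr rfl fun k _ => per i k]
  simp only [Finset.sum_add_distrib]
  congr 1
  · rw [totsum_eq, totsum_eq]
    have inner : ∀ i : Fin N, ∑ k, rowsum W i * rowsum W' k * p2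
        = rowsum W i * (∑ k, rowsum W' k) * p2 := by
      intro i; rw [← Finset.sum_mul, ← Finset.mul_sum]
    rw [Finset.sum_congr rfl fun i _ => inner i, ← Finset.sum_mul, ← Finset.sum_mul]
    ring
  · rw [Qsum, Finset.mul_sum]
    refine Finset.sum_congr rfl fun i _ => ?_
    rw [Finset.sum_ite_eq _ i (fun k => rowsum W i * rowsum W' k * (p1 - p2))]
    simp only [Finset.mem_univ, if_true]
    ring

end covs2

section covs3
variable {N mm : ℕ}

lemma pE_Ux_L (hmN : mm ≤ N) (h3N : 3 ≤ N) {W : Matrix (Fin N) (Fin N) ℝ}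
    (hsym : W.IsSymm) (hdiag : ∀ i, W i i = 0) (W' : Matrix (Fin N) (Fin N) ℝ) :
    pE (fun π => Ux W mm π * Lfun W' mm π)
      = ((mm : ℝ) * ((mm : ℝ) - 1) * ((mm : ℝ) - 2))
          / ((N : ℝ) * ((N : ℝ) - 1) * ((N : ℝ) - 2)) * (totsum W * totsum W')
        + (((mm : ℝ) * ((mm : ℝ) - 1)) / ((N : ℝ) * ((N : ℝ) - 1))
            - ((mm : ℝ) * ((mm : ℝ) - 1) * ((mm : ℝ) - 2))
              / ((N : ℝ) * ((N : ℝ) - 1) * ((N : ℝ) - 2))) * (2 * Qsum W W') := by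
  set p2 : ℝ := ((mm : ℝ) * ((mm : ℝ) - 1)) / ((N : ℝ) * ((N : ℝ) - 1)) with hp2
  set p3 : ℝ := ((mm : ℝ) * ((mm : ℝ) - 1) * ((mm : ℝ) - 2))
      / ((N : ℝ) * ((N : ℝ) - 1) * ((N : ℝ) - 2)) with hp3
  have expand : (fun π => Ux W mm π * Lfun W' mm π)
      = fun π => ∑ i, ∑ j, ∑ k,
          W i j * rowsum W' k * (chi mm i π * chi mm j π * chi mm k π) := by
    funext π
    rw [Ux_eq mm W π]
    unfold Lfun
    rw [Finset.sum_mul]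
    refine Finset.sum_congr rfl fun i _ => ?_
    rw [Finset.sum_mul]
    refine Finset.sum_congr rfl fun j _ => ?_
    rw [Finset.mul_sum]
    exact Finset.sum_congr rfl fun k _ => by ring
  rw [expand, pE_sum, Finset.sum_congr rfl fun i _ => pE_sum Finset.univ _,
    Finset.sum_congr rfl fun i _ => Finset.sum_congr rfl fun j _ => pE_sum Finset.univ _]
  have per : ∀ i j k : Fin N,
      pE (fun π => W i j * rowsum W' k * (chi mm i π * chi mm j π * chi mm k π))
        = W i j * rowsum W' k * p3
          + (if i = k then W i j * rowsum W' k * (p2 - p3) else 0)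
          + (if j = k then W i j * rowsum W' k * (p2 - p3) else 0) := by
    intro i j k
    rw [pE_smul]
    by_cases hij : i = j
    · subst hij
      rw [hdiag i]
      simp
    · by_cases hik : i = k
      · subst hik
        have hpt : ∀ π, chi mm i π * chi mm j π * chi mm i π = chi mm i π * chi mm j π := by
          intro π; rw [mul_right_comm, chi_mul_self]
        rw [pE_congr hpt, pE_chi_chi hmN (by omega) hij, if_pos rfl, if_neg (Ne.symm hij)]
        ring
      · by_cases hjk : j = k
        · subst hjk
          have hpt : ∀ π, chi mm i π * chi mm j π * chi mm j π = chi mm i π * chi mm j π := by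
            intro π; rw [mul_assoc, chi_mul_self]
          rw [pE_congr hpt, pE_chi_chi hmN (by omega) hij, if_neg hik, if_pos rfl]
          ring
        · rw [pE_chi₃ hmN h3N hij hik hjk, if_neg hik, if_neg hjk]
          ring
  rw [Finset.sum_congr rfl fun i _ => Finset.sum_congr rfl fun j _ =>
    Finset.sum_congr rfl fun k _ => per i j k]
  simp only [Finset.sum_add_distrib]
  have part1 : ∑ i : Fin N, ∑ j : Fin N, ∑ k : Fin N, W i j * rowsum W' k * p3
      = p3 * (totsum W * totsum W') := by
    have inner : ∀ i j : Fin N, ∑ k : Fin N, W i j * rowsum W' k * p3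
        = W i j * totsum W' * p3 := by
      intro i j
      rw [← Finset.sum_mul, ← Finset.mul_sum, totsum_eq]
    rw [Finset.sum_congr rfl fun i _ => Finset.sum_congr rfl fun j _ => inner i j]
    have inner2 : ∀ i : Fin N, ∑ j : Fin N, W i j * totsum W' * p3
        = (∑ j : Fin N, W i j) * totsum W' * p3 := by
      intro i; rw [← Finset.sum_mul, ← Finset.sum_mul]
    rw [Finset.sum_congr rfl fun i _ => inner2 i, ← Finset.sum_mul, ← Finset.sum_mul,
      show ∑ i : Fin N, ∑ j : Fin N, W i j = totsum W from rfl]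
    ring
  have part2 : ∑ i : Fin N, ∑ j : Fin N, ∑ k : Fin N,
      (if i = k then W i j * rowsum W' k * (p2 - p3) else 0)
      = (p2 - p3) * Qsum W W' := by
    have inner : ∀ i j : Fin N, ∑ k : Fin N,
        (if i = k then W i j * rowsum W' k * (p2 - p3) else 0)
        = W i j * rowsum W' i * (p2 - p3) := by
      intro i j
      rw [Finset.sum_ite_eq _ i (fun k => W i j * rowsum W' k * (p2 - p3))]
      simp
    rw [Finset.sum_congr rfl fun i _ => Finset.sum_congr rfl fun j _ => inner i j]
    rw [Qsum, Finset.mul_sum]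
    refine Finset.sum_congr rfl fun i _ => ?_
    have : ∀ j : Fin N, W i j * rowsum W' i * (p2 - p3)
        = W i j * (rowsum W' i * (p2 - p3)) := fun j => by ring
    rw [Finset.sum_congr rfl fun j _ => this j, ← Finset.sum_mul, show ∑ j, W i j = rowsum W i
      from rfl]
    ring
  have part3 : ∑ i : Fin N, ∑ j : Fin N, ∑ k : Fin N,
      (if j = k then W i j * rowsum W' k * (p2 - p3) else 0)
      = (p2 - p3) * Qsum W W' := by
    have inner : ∀ i j : Fin N, ∑ k : Fin N,
        (if j = k then W i j * rowsum W' k * (p2 - p3) else 0)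
        = W i j * rowsum W' j * (p2 - p3) := by
      intro i j
      rw [Finset.sum_ite_eq _ j (fun k => W i j * rowsum W' k * (p2 - p3))]
      simp
    rw [Finset.sum_congr rfl fun i _ => Finset.sum_congr rfl fun j _ => inner i j]
    rw [Finset.sum_comm]
    rw [Qsum, Finset.mul_sum]
    refine Finset.sum_congr rfl fun j _ => ?_
    have : ∀ i : Fin N, W i j * rowsum W' j * (p2 - p3)
        = W j i * (rowsum W' j * (p2 - p3)) := fun i => by rw [hsym.apply j i, mul_assoc]
    rw [Finset.sum_congr rfl fun i _ => this i, ← Finset.sum_mul, show ∑ i, W j i = rowsum W j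
      from rfl]
    ring
  rw [part1, part2, part3]
  ring

end covs3

section zc
variable {N : ℕ}

lemma pCov_aff (a b c a' b' c' : ℝ) (f g f' g' : Equiv.Perm (Fin N) → ℝ) :
    pCov (fun π => a * f π + b * g π + c) (fun π => a' * f' π + b' * g' π + c')
      = a * a' * pCov f f' + a * b' * pCov f g' + b * a' * pCov g f'
        + b * b' * pCov g g' := by
  have expand : ∀ π : Equiv.Perm (Fin N),
      (a * f π + b * g π + c) * (a' * f' π + b' * g' π + c')
        = a * a' * (f π * f' π) + (a * b' * (f π * g' π) + (b * a' * (g π * f' π)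
          + (b * b' * (g π * g' π) + ((c * a') * f' π + ((c * b') * g' π
          + ((a * c') * f π + ((b * c') * g π + c * c'))))))) := by
    intro π; ring
  rw [pCov_eq, pE_congr expand]
  simp only [pE_add, pE_smul, pE_const]
  simp only [pCov_eq]
  ring

lemma pCov_zero_key {mm nn : ℕ} (hN : N = mm + nn) (hm : 2 ≤ mm) (hn : 2 ≤ nn)
    {W W' : Matrix (Fin N) (Fin N) ℝ} (hsymW : W.IsSymm) (hdiagW : ∀ i, W i i = 0)
    (hsymW' : W'.IsSymm) :
    pCov (UwS W mm nn) (fun π => Ux W' mm π - Uy W' mm π) = 0 := by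
  have hmN : mm ≤ N := by omega
  have h3N : 3 ≤ N := by omega
  have hc1 : UwS W mm nn = fun π =>
      1 * Ux W mm π + (-2 * (((mm : ℝ) - 1) / ((N : ℝ) - 2))) * Lfun W mm π
        + ((mm : ℝ) - 1) / ((N : ℝ) - 2) * totsum W := by
    funext π
    rw [Uw_eq hN hm hn hsymW π]
    ring
  have hc2 : (fun π => Ux W' mm π - Uy W' mm π) = fun π =>
      (0 : ℝ) * Ux W mm π + 2 * Lfun W' mm π + (- totsum W') := by
    funext π
    rw [diff_eq mm hsymW' π]
    ring
  rw [hc1, hc2, pCov_aff]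
  have covLL : pCov (Lfun W mm) (Lfun W' mm)
      = (((mm : ℝ) * ((mm : ℝ) - 1)) / ((N : ℝ) * ((N : ℝ) - 1))
          - ((mm : ℝ) / N) * ((mm : ℝ) / N)) * (totsum W * totsum W')
        + ((mm : ℝ) / N - ((mm : ℝ) * ((mm : ℝ) - 1)) / ((N : ℝ) * ((N : ℝ) - 1)))
          * Qsum W W' := by
    rw [pCov_eq, pE_L_L hmN (by omega) W W', pE_L hmN (by omega) W, pE_L hmN (by omega) W']
    ring
  have covUxL : pCov (Ux W mm) (Lfun W' mm)
      = (((mm : ℝ) * ((mm : ℝ) - 1) * ((mm : ℝ) - 2))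
          / ((N : ℝ) * ((N : ℝ) - 1) * ((N : ℝ) - 2))
          - (((mm : ℝ) * ((mm : ℝ) - 1)) / ((N : ℝ) * ((N : ℝ) - 1))) * ((mm : ℝ) / N))
            * (totsum W * totsum W')
        + (((mm : ℝ) * ((mm : ℝ) - 1)) / ((N : ℝ) * ((N : ℝ) - 1))
            - ((mm : ℝ) * ((mm : ℝ) - 1) * ((mm : ℝ) - 2))
              / ((N : ℝ) * ((N : ℝ) - 1) * ((N : ℝ) - 2))) * (2 * Qsum W W') := by
    rw [pCov_eq, pE_Ux_L hmN h3N hsymW hdiagW W', pE_Ux hmN (by omega) hdiagW,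
      pE_L hmN (by omega) W']
    ring
  rw [covLL, covUxL]
  have hNc : (N : ℝ) = (mm : ℝ) + (nn : ℝ) := by rw [hN]; push_cast; ring
  have hm' : (2 : ℝ) ≤ (mm : ℝ) := by exact_mod_cast hm
  have hn' : (2 : ℝ) ≤ (nn : ℝ) := by exact_mod_cast hn
  have d0 : (N : ℝ) ≠ 0 := by rw [hNc]; intro h; linarith
  have d1 : (N : ℝ) - 1 ≠ 0 := by rw [hNc]; intro h; linarith
  have d2 : (N : ℝ) - 2 ≠ 0 := by rw [hNc]; intro h; linarith
  field_simp
  rw [hNc]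
  ring

end zc

section blocks
variable {S : ℕ}

/-- scalar-block matrix: diagonal in the `Fin S` component. -/
noncomputable def sblk (S : ℕ) (c : Bool → Bool → ℝ) :
    Matrix (Fin S × Bool) (Fin S × Bool) ℝ :=
  Matrix.of fun p q => if p.1 = q.1 then c p.2 q.2 else 0

/-- bool-block matrix: diagonal in the `Bool` component. -/
noncomputable def bblk (S : ℕ) (E : Bool → Matrix (Fin S) (Fin S) ℝ) :
    Matrix (Fin S × Bool) (Fin S × Bool) ℝ :=
  Matrix.of fun p q => if p.2 = q.2 then E p.2 p.1 q.1 else 0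

lemma sblk_mul_sblk (c d : Bool → Bool → ℝ) :
    sblk S c * sblk S d
      = sblk S (fun a b => c a false * d false b + c a true * d true b) := by
  ext p q
  rw [Matrix.mul_apply, Fintype.sum_prod_type]
  have inner : ∀ s : Fin S, ∀ b : Bool,
      sblk S c p (s, b) * sblk S d (s, b) q
        = if p.1 = s then c p.2 b * (if s = q.1 then d b q.2 else 0) else 0 := by
    intro s b
    simp only [sblk, Matrix.of_apply]
    by_cases h : p.1 = s <;> simp [h]
  simp only [inner]
  rw [Finset.sum_comm]
  have h2 : ∀ b : Bool, ∑ s : Fin S,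
      (if p.1 = s then c p.2 b * (if s = q.1 then d b q.2 else 0) else 0)
      = c p.2 b * (if p.1 = q.1 then d b q.2 else 0) := by
    intro b
    rw [Finset.sum_ite_eq Finset.univ p.1 (fun s => c p.2 b * (if s = q.1 then d b q.2 else 0))]
    simp
  simp only [h2]
  rw [Fintype.sum_bool]
  by_cases h : p.1 = q.1 <;> simp [sblk, h] <;> ring

end blocks

section blocks2
variable {S : ℕ}

lemma sblk_id : sblk S (fun a b => if a = b then 1 else 0) = 1 := by
  ext p q
  simp only [sblk, Matrix.of_apply, Matrix.one_apply, Prod.ext_iff]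
  by_cases h1 : p.1 = q.1 <;> by_cases h2 : p.2 = q.2 <;> simp [h1, h2]

lemma sblk_mulVec (c : Bool → Bool → ℝ) (v : Fin S × Bool → ℝ) (p : Fin S × Bool) :
    (sblk S c *ᵥ v) p = c p.2 false * v (p.1, false) + c p.2 true * v (p.1, true) := by
  unfold Matrix.mulVec dotProduct
  rw [Fintype.sum_prod_type]
  have inner : ∀ s : Fin S, ∀ b : Bool, sblk S c p (s, b) * v (s, b)
      = if p.1 = s then c p.2 b * v (s, b) else 0 := by
    intro s b
    simp only [sblk, Matrix.of_apply]
    by_cases h : p.1 = s <;> simp [h]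
  simp only [inner]
  rw [Finset.sum_comm]
  have h2 : ∀ b : Bool, ∑ s : Fin S, (if p.1 = s then c p.2 b * v (s, b) else 0)
      = c p.2 b * v (p.1, b) := by
    intro b
    rw [Finset.sum_ite_eq Finset.univ p.1 (fun s => c p.2 b * v (s, b))]
    simp
  simp only [h2]
  rw [Fintype.sum_bool]
  ring

lemma bblk_mul_bblk (E F : Bool → Matrix (Fin S) (Fin S) ℝ) :
    bblk S E * bblk S F = bblk S (fun b => E b * F b) := by
  ext p q
  rw [Matrix.mul_apply, Fintype.sum_prod_type]
  have inner : ∀ s : Fin S, ∀ b : Bool,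
      bblk S E p (s, b) * bblk S F (s, b) q
        = if p.2 = b then E p.2 p.1 s * (if b = q.2 then F b s q.1 else 0) else 0 := by
    intro s b
    simp only [bblk, Matrix.of_apply]
    by_cases h : p.2 = b <;> simp [h]
  simp only [inner]
  rw [Finset.sum_comm]
  have h2 : ∀ s : Fin S, ∑ b : Bool,
      (if p.2 = b then E p.2 p.1 s * (if b = q.2 then F b s q.1 else 0) else 0)
      = E p.2 p.1 s * (if p.2 = q.2 then F p.2 s q.1 else 0) := by
    intro s
    rw [Finset.sum_ite_eq Finset.univ p.2
      (fun b => E p.2 p.1 s * (if b = q.2 then F b s q.1 else 0))]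
    simp
  rw [Finset.sum_comm]
  simp only [h2]
  by_cases h : p.2 = q.2
  · simp only [h, if_true, bblk, Matrix.of_apply, Matrix.mul_apply]
  · simp [h, bblk]

lemma bblk_id : bblk S (fun _ => (1 : Matrix (Fin S) (Fin S) ℝ)) = 1 := by
  ext p q
  simp only [bblk, Matrix.of_apply, Matrix.one_apply, Prod.ext_iff]
  by_cases h1 : p.1 = q.1 <;> by_cases h2 : p.2 = q.2 <;> simp [h1, h2]

lemma quad_bblk (E : Bool → Matrix (Fin S) (Fin S) ℝ) (x : Fin S × Bool → ℝ) :
    x ⬝ᵥ (bblk S E *ᵥ x)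
      = (fun s => x (s, false)) ⬝ᵥ (E false *ᵥ fun s => x (s, false))
        + (fun s => x (s, true)) ⬝ᵥ (E true *ᵥ fun s => x (s, true)) := by
  unfold Matrix.mulVec dotProduct
  rw [Fintype.sum_prod_type]
  have inner : ∀ s : Fin S, ∀ b : Bool,
      x (s, b) * ∑ q, bblk S E (s, b) q * x q
        = x (s, b) * ∑ s' : Fin S, E b s s' * x (s', b) := by
    intro s b
    congr 1
    rw [Fintype.sum_prod_type]
    have h3 : ∀ s' : Fin S, ∀ b' : Bool, bblk S E (s, b) (s', b') * x (s', b')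
        = if b = b' then E b s s' * x (s', b') else 0 := by
      intro s' b'
      simp only [bblk, Matrix.of_apply]
      by_cases h : b = b' <;> simp [h]
    simp only [h3]
    refine Finset.sum_congr rfl fun s' _ => ?_
    rw [Finset.sum_ite_eq Finset.univ b (fun b' => E b s s' * x (s', b'))]
    simp
  simp only [inner]
  rw [Finset.sum_comm, Fintype.sum_bool]
  ring

lemma dot_transpose_mulVec (A : Matrix (Fin S × Bool) (Fin S × Bool) ℝ)
    (x y : Fin S × Bool → ℝ) : x ⬝ᵥ (Aᵀ *ᵥ y) = (A *ᵥ x) ⬝ᵥ y := by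
  rw [Matrix.mulVec_transpose, dotProduct_comm, ← Matrix.dotProduct_mulVec, dotProduct_comm]

end blocks2

/-- T coefficients -/
noncomputable def tcf (m n N : ℕ) : Bool → Bool → ℝ
  | false, false => ((n : ℝ) - 1) / ((N : ℝ) - 2)
  | false, true => ((m : ℝ) - 1) / ((N : ℝ) - 2)
  | true, false => 1
  | true, true => -1

/-- inverse T coefficients -/
noncomputable def tcf' (m n N : ℕ) : Bool → Bool → ℝ
  | false, false => 1
  | false, true => ((m : ℝ) - 1) / ((N : ℝ) - 2)
  | true, false => 1
  | true, true => -(((n : ℝ) - 1) / ((N : ℝ) - 2))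


theorem stmt_16 (S m n N : ℕ) (hS : 1 ≤ S) (hm : 2 ≤ m) (hn : 2 ≤ n) (hN : N = m + n)
    (W : Fin S → Matrix (Fin N) (Fin N) ℝ)
    (hsym : ∀ s, (W s).IsSymm) (hdiag : ∀ s i, W s i i = 0)
    (hw : Matrix.PosDef (Matrix.of fun s s' : Fin S =>
        pCov (UwS (W s) m n) (UwS (W s') m n)))
    (hdiff : Matrix.PosDef (Matrix.of fun s s' : Fin S =>
        pCov (fun π => Ux (W s) m π - Uy (W s) m π)
          (fun π => Ux (W s') m π - Uy (W s') m π))) :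
    Matrix.PosDef (Matrix.of fun p q : Fin S × Bool => pCov (VS W m p) (VS W m q))
    ∧ ∀ π : Equiv.Perm (Fin N),
        (fun p : Fin S × Bool => VS W m p π - pE (VS W m p)) ⬝ᵥ
            ((Matrix.of fun p q : Fin S × Bool => pCov (VS W m p) (VS W m q))⁻¹ *ᵥ
              (fun p : Fin S × Bool => VS W m p π - pE (VS W m p)))
          = (fun s : Fin S => UwS (W s) m n π - pE (UwS (W s) m n)) ⬝ᵥ
              ((Matrix.of fun s s' : Fin S =>
                  pCov (UwS (W s) m n) (UwS (W s') m n))⁻¹ *ᵥ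
                (fun s : Fin S => UwS (W s) m n π - pE (UwS (W s) m n)))
            + (fun s : Fin S => (Ux (W s) m π - Uy (W s) m π)
                  - pE (fun π' => Ux (W s) m π' - Uy (W s) m π')) ⬝ᵥ
              ((Matrix.of fun s s' : Fin S =>
                  pCov (fun π' => Ux (W s) m π' - Uy (W s) m π')
                    (fun π' => Ux (W s') m π' - Uy (W s') m π'))⁻¹ *ᵥ
                (fun s : Fin S => (Ux (W s) m π - Uy (W s) m π)
                  - pE (fun π' => Ux (W s) m π' - Uy (W s) m π'))) := by
  have hm' : (2 : ℝ) ≤ (m : ℝ) := by exact_mod_cast hm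
  have hn' : (2 : ℝ) ≤ (n : ℝ) := by exact_mod_cast hn
  have hNc : (N : ℝ) = (m : ℝ) + (n : ℝ) := by rw [hN]; push_cast; ring
  have hD : (N : ℝ) - 2 ≠ 0 := by rw [hNc]; intro h; linarith
  -- matrices
  set Sw : Matrix (Fin S) (Fin S) ℝ := Matrix.of fun s s' : Fin S =>
      pCov (UwS (W s) m n) (UwS (W s') m n) with hSw
  set Sd : Matrix (Fin S) (Fin S) ℝ := Matrix.of fun s s' : Fin S =>
      pCov (fun π => Ux (W s) m π - Uy (W s) m π)
        (fun π => Ux (W s') m π - Uy (W s') m π) with hSd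
  set Sb : Matrix (Fin S × Bool) (Fin S × Bool) ℝ := Matrix.of
      fun p q : Fin S × Bool => pCov (VS W m p) (VS W m q) with hSb
  set T : Matrix (Fin S × Bool) (Fin S × Bool) ℝ := sblk S (tcf m n N) with hT
  set T' : Matrix (Fin S × Bool) (Fin S × Bool) ℝ := sblk S (tcf' m n N) with hT'
  set E : Bool → Matrix (Fin S) (Fin S) ℝ := fun b => if b then Sd else Sw with hE
  set Einv : Bool → Matrix (Fin S) (Fin S) ℝ := fun b => if b then Sd⁻¹ else Sw⁻¹ with hEinv
  -- VS components
  have hVSf : ∀ s : Fin S, VS W m (s, false) = Ux (W s) m := fun s => rfl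
  have hVSt : ∀ s : Fin S, VS W m (s, true) = Uy (W s) m := fun s => rfl
  -- T * T' = 1 and T' * T = 1
  have hD' : (m : ℝ) + (n : ℝ) - 2 ≠ 0 := by intro h; linarith
  have hcoef1 : (fun a b => tcf m n N a false * tcf' m n N false b
      + tcf m n N a true * tcf' m n N true b)
      = fun a b : Bool => if a = b then (1 : ℝ) else 0 := by
    funext a b
    cases a <;> cases b <;> simp only [tcf, tcf'] <;> (try rw [hNc]) <;> (try field_simp) <;> (try ring) <;> norm_num <;> ring
  have hcoef2 : (fun a b => tcf' m n N a false * tcf m n N false b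
      + tcf' m n N a true * tcf m n N true b)
      = fun a b : Bool => if a = b then (1 : ℝ) else 0 := by
    funext a b
    cases a <;> cases b <;> simp only [tcf, tcf'] <;> (try rw [hNc]) <;> (try field_simp) <;> (try ring) <;> norm_num <;> ring
  have hTT' : T * T' = 1 := by
    rw [hT, hT', sblk_mul_sblk, hcoef1, sblk_id]
  have hT'T : T' * T = 1 := by
    rw [hT, hT', sblk_mul_sblk, hcoef2, sblk_id]
  -- the transformed statistics
  have hgg : ∀ p : Fin S × Bool,
      (if p.2 then (fun π => Ux (W p.1) m π - Uy (W p.1) m π) else UwS (W p.1) m n)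
        = fun π => tcf m n N p.2 false * VS W m (p.1, false) π
            + tcf m n N p.2 true * VS W m (p.1, true) π + 0 := by
    rintro ⟨s, b⟩
    cases b
    · funext π
      show UwS (W s) m n π
        = tcf m n N false false * Ux (W s) m π + tcf m n N false true * Uy (W s) m π + 0
      unfold UwS
      simp only [tcf]
      ring
    · funext π
      show Ux (W s) m π - Uy (W s) m π
        = tcf m n N true false * Ux (W s) m π + tcf m n N true true * Uy (W s) m π + 0
      simp only [tcf]
      ring
  -- entries of T Σ Tᵀ
  have hentry : ∀ p q : Fin S × Bool, (T * Sb * Tᵀ) p q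
      = pCov (if p.2 then (fun π => Ux (W p.1) m π - Uy (W p.1) m π) else UwS (W p.1) m n)
          (if q.2 then (fun π => Ux (W q.1) m π - Uy (W q.1) m π) else UwS (W q.1) m n) := by
    intro p q
    rw [hgg p, hgg q, pCov_aff]
    have e1 : (T * Sb * Tᵀ) p q
        = (T * Sb) p (q.1, false) * tcf m n N q.2 false
          + (T * Sb) p (q.1, true) * tcf m n N q.2 true := by
      rw [Matrix.mul_apply, Fintype.sum_prod_type]
      have h3 : ∀ s : Fin S, ∀ b : Bool, (T * Sb) p (s, b) * Tᵀ (s, b) q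
          = if q.1 = s then (T * Sb) p (s, b) * tcf m n N q.2 b else 0 := by
        intro s b
        rw [Matrix.transpose_apply, hT]
        simp only [sblk, Matrix.of_apply]
        by_cases h : q.1 = s <;> simp [h]
      simp only [h3]
      rw [Finset.sum_comm]
      have h4 : ∀ b : Bool, ∑ s : Fin S,
          (if q.1 = s then (T * Sb) p (s, b) * tcf m n N q.2 b else 0)
          = (T * Sb) p (q.1, b) * tcf m n N q.2 b := by
        intro b
        rw [Finset.sum_ite_eq Finset.univ q.1
          (fun s => (T * Sb) p (s, b) * tcf m n N q.2 b)]
        simp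
      simp only [h4]
      rw [Fintype.sum_bool]
      ring
    have e2 : ∀ r : Fin S × Bool, (T * Sb) p r
        = tcf m n N p.2 false * Sb (p.1, false) r
          + tcf m n N p.2 true * Sb (p.1, true) r := by
      intro r
      rw [Matrix.mul_apply, Fintype.sum_prod_type]
      have h3 : ∀ s : Fin S, ∀ b : Bool, T p (s, b) * Sb (s, b) r
          = if p.1 = s then tcf m n N p.2 b * Sb (s, b) r else 0 := by
        intro s b
        rw [hT]
        simp only [sblk, Matrix.of_apply]
        by_cases h : p.1 = s <;> simp [h]
      simp only [h3]
      rw [Finset.sum_comm]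
      have h4 : ∀ b : Bool, ∑ s : Fin S,
          (if p.1 = s then tcf m n N p.2 b * Sb (s, b) r else 0)
          = tcf m n N p.2 b * Sb (p.1, b) r := by
        intro b
        rw [Finset.sum_ite_eq Finset.univ p.1 (fun s => tcf m n N p.2 b * Sb (s, b) r)]
        simp
      simp only [h4]
      rw [Fintype.sum_bool]
      ring
    rw [e1, e2, e2]
    simp only [hSb, Matrix.of_apply]
    ring
  -- block structure
  have hA : T * Sb * Tᵀ = bblk S E := by
    ext p q
    rw [hentry p q]
    rcases p with ⟨s, b⟩
    rcases q with ⟨s', b'⟩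
    cases b <;> cases b'
    · rfl
    · show pCov (UwS (W s) m n) (fun π => Ux (W s') m π - Uy (W s') m π) = (0 : ℝ)
      exact pCov_zero_key hN hm hn (hsym s) (hdiag s) (hsym s')
    · show pCov (fun π => Ux (W s) m π - Uy (W s) m π) (UwS (W s') m n) = (0 : ℝ)
      rw [pCov_comm]
      exact pCov_zero_key hN hm hn (hsym s') (hdiag s') (hsym s)
    · rfl
  -- invertibility and inverse structure
  have hTt : Tᵀ * T'ᵀ = 1 := by rw [← Matrix.transpose_mul, hT'T, Matrix.transpose_one]
  have hT't : T'ᵀ * Tᵀ = 1 := by rw [← Matrix.transpose_mul, hTT', Matrix.transpose_one]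
  have hSbeq : Sb = T' * bblk S E * T'ᵀ := by
    rw [← hA]
    calc Sb = (T' * T) * Sb * (Tᵀ * T'ᵀ) := by
          rw [hT'T, hTt, Matrix.one_mul, Matrix.mul_one]
      _ = T' * (T * Sb * Tᵀ) * T'ᵀ := by simp only [Matrix.mul_assoc]
  have hSwinv : Sw * Sw⁻¹ = 1 := Matrix.mul_nonsing_inv _ hw.det_pos.ne'.isUnit
  have hSdinv : Sd * Sd⁻¹ = 1 := Matrix.mul_nonsing_inv _ hdiff.det_pos.ne'.isUnit
  have hEf : E false = Sw := rfl
  have hEt : E true = Sd := rfl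
  have hEif : Einv false = Sw⁻¹ := rfl
  have hEit : Einv true = Sd⁻¹ := rfl
  have hEE : bblk S E * bblk S Einv = 1 := by
    rw [bblk_mul_bblk]
    rw [show (fun b => E b * Einv b) = fun _ => (1 : Matrix (Fin S) (Fin S) ℝ) from
      funext fun b => by cases b
                         · rw [hEf, hEif, hSwinv]
                         · rw [hEt, hEit, hSdinv]]
    exact bblk_id
  have hSbinv : Sb⁻¹ = Tᵀ * bblk S Einv * T := by
    apply Matrix.inv_eq_right_inv
    calc Sb * (Tᵀ * bblk S Einv * T)
        = T' * (bblk S E * ((T'ᵀ * Tᵀ) * (bblk S Einv * T))) := by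
          rw [hSbeq]; simp only [Matrix.mul_assoc]
      _ = T' * (bblk S E * (bblk S Einv * T)) := by rw [hT't, Matrix.one_mul]
      _ = T' * ((bblk S E * bblk S Einv) * T) := by simp only [Matrix.mul_assoc]
      _ = T' * T := by rw [hEE, Matrix.one_mul]
      _ = 1 := hT'T
  -- hermitian
  have hherm : Sb.IsHermitian := by
    show Sbᴴ = Sb
    ext p q
    simp only [Matrix.conjTranspose_apply, hSb, Matrix.of_apply, star_trivial]
    exact pCov_comm _ _
  -- positive definiteness
  have hstar : ∀ x : Fin S × Bool → ℝ, star x = x := fun x => funext fun p => by simp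
  have hstar' : ∀ x : Fin S → ℝ, star x = x := fun x => funext fun p => by simp
  have hpos : Sb.PosDef := by
    refine Matrix.PosDef.of_dotProduct_mulVec_pos hherm (fun x hx => ?_)
    rw [hstar x]
    set y : Fin S × Bool → ℝ := T'ᵀ *ᵥ x with hy
    have hxy : x ⬝ᵥ (Sb *ᵥ x) = y ⬝ᵥ (bblk S E *ᵥ y) := by
      rw [hSbeq, ← Matrix.mulVec_mulVec, ← Matrix.mulVec_mulVec,
        ← Matrix.transpose_transpose T', dot_transpose_mulVec, Matrix.transpose_transpose]
    rw [hxy, quad_bblk, hEf, hEt]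
    have hyx : Tᵀ *ᵥ y = x := by
      rw [hy, Matrix.mulVec_mulVec, hTt, Matrix.one_mulVec]
    have hyne : y ≠ 0 := by
      intro h
      apply hx
      rw [← hyx, h, Matrix.mulVec_zero]
    have hcases : (fun s => y (s, false)) ≠ 0 ∨ (fun s => y (s, true)) ≠ 0 := by
      by_contra h
      push_neg at h
      apply hyne
      funext p
      rcases p with ⟨s, b⟩
      cases b
      · exact congrFun h.1 s
      · exact congrFun h.2 s
    have t1 : 0 ≤ (fun s => y (s, false)) ⬝ᵥ (Sw *ᵥ fun s => y (s, false)) := by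
      have := hw.posSemidef.dotProduct_mulVec_nonneg (fun s => y (s, false))
      rwa [hstar'] at this
    have t2 : 0 ≤ (fun s => y (s, true)) ⬝ᵥ (Sd *ᵥ fun s => y (s, true)) := by
      have := hdiff.posSemidef.dotProduct_mulVec_nonneg (fun s => y (s, true))
      rwa [hstar'] at this
    rcases hcases with h | h
    · have := hw.dotProduct_mulVec_pos h
      rw [hstar'] at this
      linarith
    · have := hdiff.dotProduct_mulVec_pos h
      rw [hstar'] at this
      linarith
  refine ⟨hpos, fun π => ?_⟩
  set v : Fin S × Bool → ℝ := fun p => VS W m p π - pE (VS W m p) with hv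
  rw [hSbinv, ← Matrix.mulVec_mulVec, ← Matrix.mulVec_mulVec, dot_transpose_mulVec]
  set u : Fin S × Bool → ℝ := T *ᵥ v with hu
  rw [quad_bblk, hEif, hEit]
  have hu_apply : ∀ p : Fin S × Bool,
      u p = tcf m n N p.2 false * v (p.1, false) + tcf m n N p.2 true * v (p.1, true) := by
    intro p
    rw [hu, hT, sblk_mulVec]
  have hpE_aff : ∀ p : Fin S × Bool,
      pE (if p.2 then (fun π' => Ux (W p.1) m π' - Uy (W p.1) m π') else UwS (W p.1) m n)
        = tcf m n N p.2 false * pE (VS W m (p.1, false))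
          + tcf m n N p.2 true * pE (VS W m (p.1, true)) := by
    intro p
    rw [hgg p]
    simp only [pE_add, pE_smul, pE_const]
    ring
  have hu_f : (fun s => u (s, false)) = fun s => UwS (W s) m n π - pE (UwS (W s) m n) := by
    funext s
    rw [hu_apply (s, false)]
    have h1 := hpE_aff (s, false)
    have h2 := congrFun (hgg (s, false)) π
    simp only at h1 h2
    rw [show pE (UwS (W s) m n)
        = tcf m n N false false * pE (VS W m (s, false))
          + tcf m n N false true * pE (VS W m (s, true)) from h1,
      show UwS (W s) m n π
        = tcf m n N false false * VS W m (s, false) π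
          + tcf m n N false true * VS W m (s, true) π + 0 from h2]
    simp only [hv]
    ring
  have hu_t : (fun s => u (s, true))
      = fun s => (Ux (W s) m π - Uy (W s) m π)
          - pE (fun π' => Ux (W s) m π' - Uy (W s) m π') := by
    funext s
    rw [hu_apply (s, true)]
    have h1 := hpE_aff (s, true)
    have h2 := congrFun (hgg (s, true)) π
    simp only at h1 h2
    rw [show pE (fun π' => Ux (W s) m π' - Uy (W s) m π')
        = tcf m n N true false * pE (VS W m (s, false))
          + tcf m n N true true * pE (VS W m (s, true)) from h1,
      show Ux (W s) m π - Uy (W s) m π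
        = tcf m n N true false * VS W m (s, false) π
          + tcf m n N true true * VS W m (s, true) π + 0 from h2]
    simp only [hv]
    ring
  rw [hu_f, hu_t]
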